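/- Let k = 𝔽_q be a finite field, r ≥ 1, e ≥ 1 a divisor of q − 1, g ∈ k_r[X], f(X) = g(X^{(q−1)/e}), and χ : kˣ → ℂ a multiplicative character extended by zero to all of k. Then ∑_{x ∈ k_r} χ(N(f(x))) = χ(N(g(0))) + ((q−1)/e) · ∑_{μ ∈ kˣ, μ^e = 1} ∑_{x ∈ k_rˣ, N(x) = μ} χ(N(g(x))). -/

import Mathlib

open Polynomial
open Finset

lemma norm_formula {k K : Type*} [Field k] [Fintype k] [Field K] [Fintype K]
    [Algebra k K] (q r : ℕ) (hq : Fintype.card k = q) (hK : Fintype.card K = q ^ r)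
    (x : K) :
    algebraMap k K (Algebra.norm k x) = x ^ (∑ i ∈ Finset.range r, q ^ i) := by
  classical
  have hq2 : 1 < q := hq ▸ Fintype.one_lt_card
  have hfr : Module.finrank k K = r := by
    have h1 : Fintype.card K = Fintype.card k ^ Module.finrank k K :=
      Module.card_eq_pow_finrank
    rw [hq, hK] at h1
    exact (Nat.pow_right_injective hq2 h1).symm
  obtain ⟨p, hchar⟩ := CharP.exists k
  haveI := hchar
  haveI : CharP K p := charP_of_injective_algebraMap (algebraMap k K).injective p
  obtain ⟨n, hp, hn⟩ := FiniteField.card k p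
  haveI : Fact p.Prime := ⟨hp⟩
  have hqpn : q = p ^ (n : ℕ) := by rw [← hq, hn]
  have hcommutes : ∀ a : k, (iterateFrobenius K p n) (algebraMap k K a) = algebraMap k K a := by
    intro a
    rw [iterateFrobenius_def, ← map_pow, ← hqpn]
    rw [← hq, FiniteField.pow_card a]
  let ψA : K →ₐ[k] K := { (iterateFrobenius K p n : K →+* K) with commutes' := hcommutes }
  have hbij : Function.Bijective ψA :=
    Finite.injective_iff_bijective.mp (RingHom.injective (ψA : K →+* K))
  let ψ : K ≃ₐ[k] K := AlgEquiv.ofBijective ψA hbij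
  have hψ : ∀ y : K, ψ y = y ^ q := fun y => by
    show iterateFrobenius K p n y = y ^ q
    rw [iterateFrobenius_def, hqpn]
  have hψpow : ∀ (i : ℕ) (y : K), (ψ ^ i) y = y ^ q ^ i := by
    intro i
    induction i with
    | zero => intro y; simp
    | succ m ih =>
        intro y
        rw [pow_succ', AlgEquiv.mul_apply, hψ, ih, ← pow_mul, pow_succ]
  haveI : IsGalois k K := inferInstance
  have hcard : Fintype.card (K ≃ₐ[k] K) = r := by
    rw [← Nat.card_eq_fintype_card, IsGalois.card_aut_eq_finrank, hfr]
  have horder : orderOf ψ = r := by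
    refine le_antisymm (hcard ▸ orderOf_le_card_univ) ?_
    by_contra hlt
    push_neg at hlt
    have ht0 : 0 < orderOf ψ := orderOf_pos ψ
    set t := orderOf ψ with ht
    have h1 : ∀ y : K, y ^ q ^ t = y := by
      intro y
      have h2 := pow_orderOf_eq_one ψ
      calc y ^ q ^ t = (ψ ^ t) y := (hψpow t y).symm
        _ = y := by rw [h2]; simp
    have hne : (X ^ q ^ t - X : K[X]) ≠ 0 :=
      FiniteField.X_pow_card_pow_sub_X_ne_zero K ht0.ne' hq2
    have hsub : (Finset.univ : Finset K) ⊆ (X ^ q ^ t - X : K[X]).roots.toFinset := by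
      intro y _
      rw [Multiset.mem_toFinset, mem_roots hne]
      simp [sub_eq_zero, h1 y]
    have hle : Fintype.card K ≤ q ^ t := by
      calc Fintype.card K ≤ (X ^ q ^ t - X : K[X]).roots.toFinset.card :=
            Finset.card_le_card hsub
        _ ≤ Multiset.card (X ^ q ^ t - X : K[X]).roots := Multiset.toFinset_card_le _
        _ ≤ (X ^ q ^ t - X : K[X]).natDegree := Polynomial.card_roots' _
        _ = q ^ t := FiniteField.X_pow_card_pow_sub_X_natDegree_eq K ht0.ne' hq2
    rw [hK] at hle
    exact absurd hle (not_le.mpr (Nat.pow_lt_pow_right hq2 hlt))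
  have hbij2 : Function.Bijective (fun i : Fin r => ψ ^ (i : ℕ)) := by
    rw [Fintype.bijective_iff_injective_and_card]
    refine ⟨fun i j hij => ?_, by simp [hcard]⟩
    have := (pow_eq_pow_iff_modEq).mp hij
    rw [horder] at this
    exact Fin.ext (this.eq_of_lt_of_lt i.isLt j.isLt)
  rw [Algebra.norm_eq_prod_automorphisms]
  rw [← Fintype.prod_bijective _ hbij2 _ (fun σ : K ≃ₐ[k] K => σ x) (fun i => rfl)]
  simp_rw [hψpow]
  rw [Finset.prod_pow_eq_pow_sum]
  rw [← Fin.sum_univ_eq_sum_range]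


open scoped Classical in
/-- For `f(X) = g(X^{(q−1)/e})`,
`∑_{x ∈ k_r} χ(N(f(x))) = χ(N(g(0))) + ((q−1)/e) ∑_{μ^e = 1} ∑_{N(x) = μ} χ(N(g(x)))`. -/
theorem stmt5 {k K : Type*} [Field k] [Fintype k] [Field K] [Fintype K] [Algebra k K]
    (q r e : ℕ) (hq : Fintype.card k = q) (hr : 1 ≤ r) (hK : Fintype.card K = q ^ r)
    (he : 1 ≤ e) (hdvd : e ∣ q - 1)
    (g f : Polynomial K) (hf : f = g.comp (X ^ ((q - 1) / e)))
    (χ : MulChar k ℂ) :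
    ∑ x : K, χ (Algebra.norm k (f.eval x)) =
      χ (Algebra.norm k (g.eval 0)) +
        (((q - 1) / e : ℕ) : ℂ) *
          ∑ μ ∈ Finset.univ.filter (fun μ : kˣ => μ ^ e = 1),
            ∑ x ∈ Finset.univ.filter (fun x : Kˣ => Algebra.norm k (x : K) = (μ : k)),
              χ (Algebra.norm k (g.eval (x : K))) := by
  classical
  subst hf
  have hq2 : 1 < q := hq ▸ Fintype.one_lt_card
  set d := (q - 1) / e with hd
  set F : K → ℂ := fun y => χ (Algebra.norm k (g.eval y)) with hF
  have hde : d * e = q - 1 := Nat.div_mul_cancel hdvd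
  have hd0 : 0 < d := Nat.div_pos (Nat.le_of_dvd (by omega) hdvd) he
  set M := ∑ i ∈ Finset.range r, q ^ i with hM
  have hM0 : 0 < M := by
    have : (0:ℕ) ∈ Finset.range r := Finset.mem_range.mpr hr
    calc (0:ℕ) < q ^ 0 := by norm_num
      _ ≤ M := Finset.single_le_sum (f := fun i => q ^ i) (fun i _ => Nat.zero_le _) this
  have hcardU : Fintype.card Kˣ = q ^ r - 1 := by rw [Fintype.card_units, hK]
  have hgeom : (q - 1) * M = q ^ r - 1 := by
    have h2 : ((q : ℤ) - 1) * (M : ℤ) = (q : ℤ) ^ r - 1 := by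
      rw [hM]; push_cast; rw [mul_comm]; exact geom_sum_mul (q : ℤ) r
    have hq1 : 1 ≤ q := hq2.le
    have hqr1 : 1 ≤ q ^ r := Nat.one_le_pow _ _ (by omega)
    have := h2
    zify [hq1, hqr1] at *
    omega
  have hnum : d * (e * M) = q ^ r - 1 := by rw [← mul_assoc, hde, hgeom]
  have heM0 : 0 < e * M := Nat.mul_pos he hM0
  -- the equivalence between the two filters
  have normEqK : ∀ y : K, y ^ (e * M) = algebraMap k K ((Algebra.norm k y) ^ e) := by
    intro y
    rw [map_pow, norm_formula q r hq hK y, ← hM, ← pow_mul, mul_comm M e]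
  have normEq : ∀ y : Kˣ, (y ^ (e * M) = 1 ↔ (Algebra.norm k (y : K)) ^ e = 1) := by
    intro y
    rw [Units.ext_iff, Units.val_pow_eq_pow_val, Units.val_one, normEqK,
      ← map_one (algebraMap k K)]
    exact ⟨fun h => (algebraMap k K).injective h, fun h => by rw [h]⟩
  -- T : units with y^(eM) = 1
  set T : Finset Kˣ := Finset.univ.filter (fun y : Kˣ => y ^ (e * M) = 1) with hT
  -- image of pow d
  set I : Finset Kˣ := Finset.univ.image (fun x : Kˣ => x ^ d) with hI
  have himsub : I ⊆ T := by
    intro y hy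
    obtain ⟨x, -, rfl⟩ := Finset.mem_image.mp hy
    simp only [hT, Finset.mem_filter, Finset.mem_univ, true_and]
    rw [← pow_mul, hnum, ← hcardU, pow_card_eq_one]
  set c := (Finset.univ.filter (fun x : Kˣ => x ^ d = 1)).card with hc
  have hc_le : c ≤ d := IsCyclic.card_pow_eq_one_le hd0
  have hT_le : T.card ≤ e * M := IsCyclic.card_pow_eq_one_le heM0
  have hfib : ∀ y ∈ I, (Finset.univ.filter (fun x : Kˣ => x ^ d = y)).card = c := by
    intro y hy
    obtain ⟨x, -, rfl⟩ := Finset.mem_image.mp hy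
    have := MonoidHom.card_fiber_eq_of_mem_range (powMonoidHom d : Kˣ →* Kˣ)
      ⟨x, rfl⟩ ⟨1, one_pow d⟩
    rw [hc]; convert this using 3 <;> simp [powMonoidHom]
  have hcount : Fintype.card Kˣ = I.card * c := by
    rw [← Finset.card_univ, Finset.card_eq_sum_card_image (fun x : Kˣ => x ^ d) Finset.univ]
    rw [Finset.sum_congr rfl (fun y hy => hfib y hy), Finset.sum_const, smul_eq_mul]
  have hIT : I.card ≤ T.card := Finset.card_le_card himsub
  have hn0 : 0 < q ^ r - 1 := by
    have : 2 ≤ q ^ r := le_trans hq2 (Nat.le_self_pow (by omega) q)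
    omega
  have hc0 : 0 < c := by
    rw [hc]
    apply Finset.card_pos.mpr
    exact ⟨1, Finset.mem_filter.mpr ⟨Finset.mem_univ _, one_pow d⟩⟩
  have hchain : I.card * c ≤ T.card * d := Nat.mul_le_mul hIT hc_le
  have hchain2 : T.card * d ≤ (e * M) * d := Nat.mul_le_mul_right d hT_le
  have hn_eq : I.card * c = q ^ r - 1 := by rw [← hcount, hcardU]
  have hTd : T.card * d = q ^ r - 1 := by
    have h1 : (e * M) * d = q ^ r - 1 := by rw [mul_comm, hnum]
    omega
  have hI0 : 0 < I.card := by positivity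
  have hcd : c = d := by
    have h1 : I.card * c ≤ I.card * d := Nat.mul_le_mul_left _ hc_le
    have h2 : I.card * d ≤ T.card * d := Nat.mul_le_mul_right d hIT
    have h3 : I.card * d = q ^ r - 1 := by omega
    have := Nat.eq_of_mul_eq_mul_left hI0 (hn_eq.trans h3.symm)
    exact this
  have hIcT : I.card = T.card := by
    have h3 : I.card * d = q ^ r - 1 := by rw [← hcd, hn_eq]
    have := hTd
    have hd0' := hd0
    exact Nat.eq_of_mul_eq_mul_right hd0 (h3.trans hTd.symm)
  have hITeq : I = T := Finset.eq_of_subset_of_card_le himsub (le_of_eq hIcT.symm)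
  -- units sum via sum_comp
  have hmainU : ∑ x : Kˣ, F ((x : K) ^ d) = (d : ℂ) * ∑ y ∈ T, F (y : K) := by
    have h1 : ∀ x : Kˣ, F ((x : K) ^ d) = F ((x ^ d : Kˣ) : K) := by
      intro x; rw [Units.val_pow_eq_pow_val]
    simp_rw [h1]
    rw [Finset.sum_comp (fun y : Kˣ => F (y : K)) (fun x : Kˣ => x ^ d)]
    rw [← hI]
    calc ∑ y ∈ I, #(Finset.univ.filter (fun x : Kˣ => x ^ d = y)) • F (y : K)
        = ∑ y ∈ I, (d : ℂ) * F (y : K) :=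
          Finset.sum_congr rfl (fun y hy => by rw [hfib y hy, hcd, nsmul_eq_mul])
      _ = (d : ℂ) * ∑ y ∈ T, F (y : K) := by rw [hITeq, Finset.mul_sum]
  -- fiberwise for the RHS
  let ν : Kˣ →* kˣ := Units.map (Algebra.norm k : K →* k)
  have hνval : ∀ x : Kˣ, ((ν x : kˣ) : k) = Algebra.norm k (x : K) := fun x => rfl
  have hTmem : ∀ y : Kˣ, y ∈ T ↔ (ν y) ^ e = 1 := by
    intro y
    rw [hT, Finset.mem_filter]
    simp only [Finset.mem_univ, true_and]
    rw [normEq y, Units.ext_iff, Units.val_pow_eq_pow_val, hνval, Units.val_one]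
  have hRHS : ∑ μ ∈ Finset.univ.filter (fun μ : kˣ => μ ^ e = 1),
      ∑ x ∈ Finset.univ.filter (fun x : Kˣ => Algebra.norm k (x : K) = (μ : k)),
        F (x : K) = ∑ y ∈ T, F (y : K) := by
    have hfilt : ∀ μ ∈ Finset.univ.filter (fun μ : kˣ => μ ^ e = 1),
        Finset.univ.filter (fun x : Kˣ => Algebra.norm k (x : K) = (μ : k)) =
        T.filter (fun x : Kˣ => ν x = μ) := by
      intro μ hμ
      have hμ1 : μ ^ e = 1 := (Finset.mem_filter.mp hμ).2
      ext x
      simp only [Finset.mem_filter, Finset.mem_univ, true_and]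
      constructor
      · intro hx
        have hxν : ν x = μ := Units.ext (by rw [hνval]; exact hx)
        refine ⟨(hTmem x).mpr (by rw [hxν, hμ1]), hxν⟩
      · rintro ⟨-, hxν⟩
        rw [← hνval, hxν]
    have hstep : ∑ μ ∈ Finset.univ.filter (fun μ : kˣ => μ ^ e = 1),
        ∑ x ∈ Finset.univ.filter (fun x : Kˣ => Algebra.norm k (x : K) = (μ : k)), F (x : K) =
        ∑ μ ∈ Finset.univ.filter (fun μ : kˣ => μ ^ e = 1),
        ∑ x ∈ T.filter (fun x : Kˣ => ν x = μ), F (x : K) :=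
      Finset.sum_congr rfl (fun μ hμ => by rw [hfilt μ hμ])
    rw [hstep]
    exact Finset.sum_fiberwise_of_maps_to
      (fun x hx => Finset.mem_filter.mpr ⟨Finset.mem_univ _, (hTmem x).mp hx⟩)
      (fun x : Kˣ => F (x : K))
  -- split the sum over K
  have heval : ∀ x : K, (g.comp (X ^ d)).eval x = g.eval (x ^ d) := by
    intro x; simp [eval_comp]
  have hsplit : ∑ x : K, F (x ^ d) = F 0 + ∑ x : Kˣ, F ((x : K) ^ d) := by
    have h0 : F ((0:K) ^ d) = F 0 := by rw [zero_pow hd0.ne']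
    rw [Fintype.sum_eq_add_sum_compl (0 : K) (fun x => F (x ^ d)), h0]
    congr 1
    · have himg : Finset.univ.image (fun x : Kˣ => (x : K)) = ({0}ᶜ : Finset K) := by
        ext y
        simp only [Finset.mem_image, Finset.mem_univ, true_and, Finset.mem_compl,
          Finset.mem_singleton]
        constructor
        · rintro ⟨u, rfl⟩; exact u.ne_zero
        · intro hy; exact ⟨Units.mk0 y hy, rfl⟩
      rw [← himg, Finset.sum_image (fun a _ b _ h => Units.ext h)]
  calc ∑ x : K, χ (Algebra.norm k ((g.comp (X ^ d)).eval x))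
      = ∑ x : K, F (x ^ d) := by
        exact Finset.sum_congr rfl (fun x _ => by rw [heval x])
    _ = F 0 + ∑ x : Kˣ, F ((x : K) ^ d) := hsplit
    _ = F 0 + (d : ℂ) * ∑ y ∈ T, F (y : K) := by rw [hmainU]
    _ = _ := by rw [← hRHS]
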